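/- Let G be a finite graph with at least one edge and let r ≥ 2 be an integer. Let G' be the graph obtained from G as follows: on the vertex set V(G), put an edge between every pair of distinct vertices (so V(G) induces a clique in G'); for each edge v_i v_j of G and each p ∈ {1,2}, add a new vertex x^p_{ij} adjacent to both v_i and v_j, and attach to x^p_{ij} a new path of length r−1 (with new vertices, distinct for distinct pairs (i,j,p)). Then γ_r(G') = τ(G), and every minimum vertex cover of G is a minimum distance-r dominating set of G'. -/
import Mathlib


/-- `D` is a distance-`r` dominating set of `G`. -/
def IsDrDS {V : Type*} (G : SimpleGraph V) (r : ℕ) (D : Set V) : Prop :=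
  ∀ v : V, ∃ u ∈ D, G.Reachable u v ∧ G.dist u v ≤ r

/-- `γ_r(G)`: the minimum size of a distance-`r` dominating set of `G`. -/
noncomputable def gammaR {V : Type*} (G : SimpleGraph V) (r : ℕ) : ℕ :=
  sInf {n | ∃ D : Set V, IsDrDS G r D ∧ D.ncard = n}

/-- `C` is a vertex cover of `G`. -/
def IsVC {V : Type*} (G : SimpleGraph V) (C : Set V) : Prop :=
  ∀ u v : V, G.Adj u v → u ∈ C ∨ v ∈ C

/-- `τ(G)`: the minimum size of a vertex cover of `G`. -/
noncomputable def tau {V : Type*} (G : SimpleGraph V) : ℕ :=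
  sInf {n | ∃ C : Set V, IsVC G C ∧ C.ncard = n}

/-- Index type for the edges of `G`: each edge is recorded as its ordered pair
of endpoints `(u, v)` with `u < v`. -/
abbrev EdgeIdx {V : Type*} [LinearOrder V] (G : SimpleGraph V) : Type _ :=
  {p : V × V // G.Adj p.1 p.2 ∧ p.1 < p.2}

/-- Vertex type of the graph `G'`: the original vertices of `G` (which will
form a clique), together with, for each edge `e` of `G` and each `s : Fin 2`,
a vertex `x^s_e = (e, s, 0)` adjacent to both endpoints of `e`, carrying an
attached pendant path `(e, s, 0), (e, s, 1), …, (e, s, r - 1)` of length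
`r - 1`. -/
abbrev VPrime {V : Type*} [LinearOrder V] (G : SimpleGraph V) (r : ℕ) : Type _ :=
  V ⊕ (EdgeIdx G × Fin 2 × Fin r)

/-- The base (one-directional) adjacency relation of `G'`. -/
def relPrime {V : Type*} [LinearOrder V] (G : SimpleGraph V) (r : ℕ) :
    VPrime G r → VPrime G r → Prop := fun p q =>
  -- the original vertices form a clique
  (∃ a b : V, a ≠ b ∧ p = Sum.inl a ∧ q = Sum.inl b) ∨
  -- `x^s_e` is adjacent to the first endpoint of `e`
  (∃ (e : EdgeIdx G) (s : Fin 2) (i : Fin r), (i : ℕ) = 0 ∧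
      p = Sum.inl e.1.1 ∧ q = Sum.inr (e, s, i)) ∨
  -- `x^s_e` is adjacent to the second endpoint of `e`
  (∃ (e : EdgeIdx G) (s : Fin 2) (i : Fin r), (i : ℕ) = 0 ∧
      p = Sum.inl e.1.2 ∧ q = Sum.inr (e, s, i)) ∨
  -- the pendant path of length `r - 1` attached to `x^s_e`
  (∃ (e : EdgeIdx G) (s : Fin 2) (i j : Fin r), (j : ℕ) = (i : ℕ) + 1 ∧
      p = Sum.inr (e, s, i) ∧ q = Sum.inr (e, s, j))

/-- The graph `G'` of the construction. -/
def GPrime {V : Type*} [LinearOrder V] (G : SimpleGraph V) (r : ℕ) :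
    SimpleGraph (VPrime G r) :=
  SimpleGraph.fromRel (relPrime G r)

section Aux
variable {V : Type*} [LinearOrder V] {G : SimpleGraph V} {r : ℕ}

lemma adj_inl_inl {a b : V} (h : a ≠ b) : (GPrime G r).Adj (Sum.inl a) (Sum.inl b) := by
  refine ⟨by simpa using h, Or.inl <| Or.inl ⟨a, b, h, rfl, rfl⟩⟩

lemma adj_endpoint1 (e : EdgeIdx G) (s : Fin 2) (i : Fin r) (hi : (i : ℕ) = 0) :
    (GPrime G r).Adj (Sum.inl e.1.1) (Sum.inr (e, s, i)) :=
  ⟨by simp, Or.inl <| Or.inr <| Or.inl ⟨e, s, i, hi, rfl, rfl⟩⟩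

lemma adj_endpoint2 (e : EdgeIdx G) (s : Fin 2) (i : Fin r) (hi : (i : ℕ) = 0) :
    (GPrime G r).Adj (Sum.inl e.1.2) (Sum.inr (e, s, i)) :=
  ⟨by simp, Or.inl <| Or.inr <| Or.inr <| Or.inl ⟨e, s, i, hi, rfl, rfl⟩⟩

lemma adj_tail (e : EdgeIdx G) (s : Fin 2) (i j : Fin r) (hj : (j : ℕ) = (i : ℕ) + 1) :
    (GPrime G r).Adj (Sum.inr (e, s, i)) (Sum.inr (e, s, j)) := by
  refine ⟨?_, Or.inl <| Or.inr <| Or.inr <| Or.inr ⟨e, s, i, j, hj, rfl, rfl⟩⟩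
  simp only [ne_eq, Sum.inr.injEq, Prod.mk.injEq]
  rintro ⟨-, -, h⟩
  rw [h] at hj; omega

/-- walk from a tail vertex to an endpoint of its edge -/
lemma walk_tail (e : EdgeIdx G) (s : Fin 2) (u : V) (hu : u = e.1.1 ∨ u = e.1.2) :
    ∀ (n : ℕ) (hn : n < r),
      ∃ p : (GPrime G r).Walk (Sum.inr (e, s, ⟨n, hn⟩)) (Sum.inl u), p.length = n + 1 := by
  intro n
  induction n with
  | zero =>
    intro hn
    rcases hu with h | h <;> subst h
    · exact ⟨((adj_endpoint1 e s ⟨0, hn⟩ rfl).symm).toWalk, rfl⟩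
    · exact ⟨((adj_endpoint2 e s ⟨0, hn⟩ rfl).symm).toWalk, rfl⟩
  | succ n ih =>
    intro hn
    obtain ⟨p, hp⟩ := ih (by omega)
    refine ⟨SimpleGraph.Walk.cons
      ((adj_tail e s ⟨n, by omega⟩ ⟨n+1, hn⟩ rfl).symm) p, by simp [hp]⟩

lemma lipschitz_walk (f : VPrime G r → ℤ)
    (hf : ∀ a b, (GPrime G r).Adj a b → |f a - f b| ≤ 1) :
    ∀ {u v : VPrime G r} (p : (GPrime G r).Walk u v), |f u - f v| ≤ p.length := by
  intro u v p
  induction p with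
  | nil => simp
  | @cons a b c h p ih =>
    have h1 := hf a b h
    calc |f a - f c| ≤ |f a - f b| + |f b - f c| := abs_sub_le _ _ _
      _ ≤ 1 + p.length := by exact add_le_add h1 ih
      _ = (SimpleGraph.Walk.cons h p).length := by push_cast [SimpleGraph.Walk.length_cons]; ring

end Aux

section Aux2
variable {V : Type*} [LinearOrder V] {G : SimpleGraph V} {r : ℕ}

/-- any distance-r dominator of the end of tail (e,0) is an endpoint of e or in that tail -/
lemma dominator_classify (hr : 2 ≤ r) (e : EdgeIdx G) {u : VPrime G r}
    (hreach : (GPrime G r).Reachable u (Sum.inr (e, 0, ⟨r - 1, by omega⟩)))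
    (hdist : (GPrime G r).dist u (Sum.inr (e, 0, ⟨r - 1, by omega⟩)) ≤ r) :
    u = Sum.inl e.1.1 ∨ u = Sum.inl e.1.2 ∨ ∃ j : Fin r, u = Sum.inr (e, 0, j) := by
  classical
  set x : VPrime G r := Sum.inr (e, 0, ⟨r - 1, by omega⟩) with hx
  set f : VPrime G r → ℤ := Sum.elim
    (fun v => if v = e.1.1 ∨ v = e.1.2 then (r : ℤ) else r + 1)
    (fun q => if q.1 = e ∧ q.2.1 = 0 then (r : ℤ) - 1 - ((q.2.2 : ℕ) : ℤ) else r + 1)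
    with hf
  have key : ∀ a b, relPrime G r a b → |f a - f b| ≤ 1 := by
    rintro a b (⟨x', y', hxy, rfl, rfl⟩ | ⟨e', s', i, hi, rfl, rfl⟩ |
        ⟨e', s', i, hi, rfl, rfl⟩ | ⟨e', s', i, j, hj, rfl, rfl⟩)
    · simp only [hf, Sum.elim_inl]
      rw [abs_sub_le_iff]
      split_ifs <;> constructor <;> omega
    · simp only [hf, Sum.elim_inl, Sum.elim_inr]
      have hi' : ((i : ℕ) : ℤ) = 0 := by exact_mod_cast hi
      rw [abs_sub_le_iff]
      by_cases he : e' = e ∧ s' = 0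
      · rw [if_pos he, if_pos (Or.inl (by rw [he.1]))]
        constructor <;> omega
      · rw [if_neg he]
        split_ifs <;> constructor <;> omega
    · simp only [hf, Sum.elim_inl, Sum.elim_inr]
      have hi' : ((i : ℕ) : ℤ) = 0 := by exact_mod_cast hi
      rw [abs_sub_le_iff]
      by_cases he : e' = e ∧ s' = 0
      · rw [if_pos he, if_pos (Or.inr (by rw [he.1]))]
        constructor <;> omega
      · rw [if_neg he]
        split_ifs <;> constructor <;> omega
    · simp only [hf, Sum.elim_inr]
      have hj' : ((j : ℕ) : ℤ) = ((i : ℕ) : ℤ) + 1 := by exact_mod_cast hj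
      rw [abs_sub_le_iff]
      by_cases he : e' = e ∧ s' = 0
      · rw [if_pos he, if_pos he]
        constructor <;> omega
      · rw [if_neg he, if_neg he]
        constructor <;> omega
  have hlip : ∀ a b, (GPrime G r).Adj a b → |f a - f b| ≤ 1 := by
    intro a b hab
    rw [GPrime, SimpleGraph.fromRel_adj] at hab
    rcases hab.2 with h | h
    · exact key a b h
    · rw [abs_sub_comm]; exact key b a h
  obtain ⟨p, hp⟩ := hreach.exists_walk_length_eq_dist
  have hw := lipschitz_walk f hlip p
  rw [hp] at hw
  have hux : |f u - f x| ≤ (r : ℤ) :=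
    le_trans hw (by exact_mod_cast hdist)
  have hfx : f x = 0 := by
    simp only [hx, hf, Sum.elim_inr]
    rw [if_pos ⟨trivial, trivial⟩]
    omega
  rw [hfx, sub_zero] at hux
  rcases u with v | ⟨e', s', j⟩
  · by_cases hv : v = e.1.1 ∨ v = e.1.2
    · rcases hv with h | h
      · exact Or.inl (by rw [h])
      · exact Or.inr (Or.inl (by rw [h]))
    · exfalso
      have : f (Sum.inl v) = r + 1 := by simp only [hf, Sum.elim_inl, if_neg hv]
      rw [this] at hux
      have := abs_le.mp hux
      omega
  · by_cases he : e' = e ∧ s' = 0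
    · exact Or.inr (Or.inr ⟨j, by rw [he.1, he.2]⟩)
    · exfalso
      have : f (Sum.inr (e', s', j)) = r + 1 := by simp only [hf, Sum.elim_inr, if_neg he]
      rw [this] at hux
      have := abs_le.mp hux
      omega

end Aux2

section Aux3
variable {V : Type*} [Fintype V] [LinearOrder V] {G : SimpleGraph V} {r : ℕ}

/-- projection map from V' to V -/
def gmap (G : SimpleGraph V) (r : ℕ) : VPrime G r → V :=
  Sum.elim id (fun q => q.1.1.1)

lemma cover_of_dom (hr : 2 ≤ r) (D : Set (VPrime G r)) (hD : IsDrDS (GPrime G r) r D) :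
    IsVC G (gmap G r '' D) := by
  intro a b hab
  have key : ∀ e : EdgeIdx G, e.1.1 ∈ gmap G r '' D ∨ e.1.2 ∈ gmap G r '' D := by
    intro e
    obtain ⟨u, hu, hreach, hdist⟩ := hD (Sum.inr (e, 0, ⟨r - 1, by omega⟩))
    rcases dominator_classify hr e hreach hdist with h | h | ⟨j, h⟩
    · exact Or.inl ⟨u, hu, by rw [h]; rfl⟩
    · exact Or.inr ⟨u, hu, by rw [h]; rfl⟩
    · exact Or.inl ⟨u, hu, by rw [h]; rfl⟩
  rcases lt_trichotomy a b with h | h | h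
  · rcases key ⟨(a, b), hab, h⟩ with h' | h'
    · exact Or.inl h'
    · exact Or.inr h'
  · exact absurd h hab.ne
  · rcases key ⟨(b, a), hab.symm, h⟩ with h' | h'
    · exact Or.inr h'
    · exact Or.inl h'

lemma dom_of_cover (hr : 2 ≤ r) {C : Set V} (hC : IsVC G C) (hne : C.Nonempty) :
    IsDrDS (GPrime G r) r (Sum.inl '' C) := by
  rintro (a | ⟨e, s, ⟨n, hn⟩⟩)
  · by_cases ha : a ∈ C
    · exact ⟨Sum.inl a, ⟨a, ha, rfl⟩, .refl _, by simp [SimpleGraph.dist_self]⟩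
    · obtain ⟨c, hc⟩ := hne
      have hca : c ≠ a := fun h => ha (h ▸ hc)
      have hadj : (GPrime G r).Adj (Sum.inl c) (Sum.inl a) := adj_inl_inl hca
      refine ⟨Sum.inl c, ⟨c, hc, rfl⟩, hadj.reachable, ?_⟩
      have := SimpleGraph.dist_le hadj.toWalk
      simp at this
      omega
  · rcases hC e.1.1 e.1.2 e.2.1 with h | h
    · obtain ⟨p, hp⟩ := walk_tail e s e.1.1 (Or.inl rfl) n hn
      refine ⟨Sum.inl e.1.1, ⟨_, h, rfl⟩, ⟨p.reverse⟩, ?_⟩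
      have := SimpleGraph.dist_le p.reverse
      rw [SimpleGraph.Walk.length_reverse, hp] at this
      omega
    · obtain ⟨p, hp⟩ := walk_tail e s e.1.2 (Or.inr rfl) n hn
      refine ⟨Sum.inl e.1.2, ⟨_, h, rfl⟩, ⟨p.reverse⟩, ?_⟩
      have := SimpleGraph.dist_le p.reverse
      rw [SimpleGraph.Walk.length_reverse, hp] at this
      omega

end Aux3

theorem stmt19 {V : Type*} [Fintype V] [LinearOrder V] (G : SimpleGraph V)
    (hedge : ∃ a b : V, G.Adj a b)
    (r : ℕ) (hr : 2 ≤ r) :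
    gammaR (GPrime G r) r = tau G ∧
    ∀ C : Set V, IsVC G C → C.ncard = tau G →
      IsDrDS (GPrime G r) r (Sum.inl '' C) ∧
      (Sum.inl '' C : Set (VPrime G r)).ncard = gammaR (GPrime G r) r := by
  classical
  obtain ⟨a0, b0, hab0⟩ := hedge
  have htne : {n | ∃ C : Set V, IsVC G C ∧ C.ncard = n}.Nonempty :=
    ⟨(Set.univ : Set V).ncard, Set.univ, fun u v _ => Or.inl trivial, rfl⟩
  obtain ⟨C0, hC0, hC0card⟩ := Nat.sInf_mem htne
  have hC0card' : C0.ncard = tau G := hC0card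
  have hC0ne : C0.Nonempty := by
    rcases hC0 a0 b0 hab0 with h | h
    exacts [⟨a0, h⟩, ⟨b0, h⟩]
  have hge : gammaR (GPrime G r) r ≤ tau G := by
    apply Nat.sInf_le
    exact ⟨Sum.inl '' C0, dom_of_cover hr hC0 hC0ne, by
      rw [Set.ncard_image_of_injective _ Sum.inl_injective]; exact hC0card'⟩
  have hgne : {n | ∃ D : Set (VPrime G r), IsDrDS (GPrime G r) r D ∧ D.ncard = n}.Nonempty :=
    ⟨(Set.univ : Set (VPrime G r)).ncard, Set.univ,
      fun v => ⟨v, trivial, .refl v, by simp [SimpleGraph.dist_self]⟩, rfl⟩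
  obtain ⟨D0, hD0, hD0card⟩ := Nat.sInf_mem hgne
  have hD0card' : D0.ncard = gammaR (GPrime G r) r := hD0card
  have hle : tau G ≤ gammaR (GPrime G r) r := by
    have hvc := cover_of_dom hr D0 hD0
    calc tau G ≤ (gmap G r '' D0).ncard := Nat.sInf_le ⟨_, hvc, rfl⟩
      _ ≤ D0.ncard := Set.ncard_image_le (Set.toFinite D0)
      _ = _ := hD0card'
  have heq := le_antisymm hge hle
  refine ⟨heq, ?_⟩
  intro C hC hCcard
  have hCne : C.Nonempty := by
    rcases hC a0 b0 hab0 with h | h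
    exacts [⟨a0, h⟩, ⟨b0, h⟩]
  exact ⟨dom_of_cover hr hC hCne, by
    rw [Set.ncard_image_of_injective _ Sum.inl_injective, hCcard, heq]⟩
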